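/- (Prediction error bound, preview case) For any trajectory of Σ_aug^prev with d₀(s) ∈ D₀ and δ_f(s) ∈ D_p for all s ≥ 0, and any t ≥ 0, x(t+τ) − x̂_τ(t) ∈ (A⁰F₀D₀ ⊕ ⋯ ⊕ A^{τ-1}F₀D₀) ⊕ (A⁰F_pD_p ⊕ ⋯ ⊕ A^{τ-p-1}F_pD_p); consequently, if x̂_τ(t) ∈ X̂ = X ⊖ ((A⁰F₀D₀ ⊕ ⋯ ⊕ A^{τ-1}F₀D₀) ⊕ (A⁰F_pD_p ⊕ ⋯ ⊕ A^{τ-p-1}F_pD_p)), then x(t+τ) ∈ X. -/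

import Mathlib

open Finset

/-- A trajectory of the augmented preview system `Σ_aug^prev`: `x` is the state sequence,
`uu t i` is the delayed-input component `u_i(t)` (meaningful for `1 ≤ i ≤ τ`),
`dd t j` is the previewed-disturbance component `δ_j(t)` (meaningful for `1 ≤ j ≤ p`),
`u` is the control input, `d0` the non-measurable disturbance, and `df` the incoming
previewed disturbance. The dynamics are
`x(t+1) = A x(t) + B u₁(t) + F₀ d₀(t) + F_p δ₁(t)`, `u_i(t+1) = u_{i+1}(t)` for
`1 ≤ i ≤ τ-1`, `u_τ(t+1) = u(t)`, `δ_j(t+1) = δ_{j+1}(t)` for `1 ≤ j ≤ p-1`, and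
`δ_p(t+1) = δ_f(t)`. -/
def IsPrevTraj {n m k₀ l : ℕ} (τ p : ℕ) (A : Matrix (Fin n) (Fin n) ℝ)
    (B : Matrix (Fin n) (Fin m) ℝ) (F₀ : Matrix (Fin n) (Fin k₀) ℝ)
    (Fp : Matrix (Fin n) (Fin l) ℝ) (x : ℕ → Fin n → ℝ) (uu : ℕ → ℕ → Fin m → ℝ)
    (dd : ℕ → ℕ → Fin l → ℝ) (u : ℕ → Fin m → ℝ) (d₀ : ℕ → Fin k₀ → ℝ)
    (df : ℕ → Fin l → ℝ) : Prop :=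
  ∀ t : ℕ,
    x (t + 1) =
      A.mulVec (x t) + B.mulVec (uu t 1) + F₀.mulVec (d₀ t) + Fp.mulVec (dd t 1) ∧
    (∀ i : ℕ, 1 ≤ i → i < τ → uu (t + 1) i = uu t (i + 1)) ∧
    uu (t + 1) τ = u t ∧
    (∀ j : ℕ, 1 ≤ j → j < p → dd (t + 1) j = dd t (j + 1)) ∧
    dd (t + 1) p = df t

/-- The prediction `x̂_τ(t) = A^τ x(t) + Σ_{i=1}^{τ} A^{i-1} B u_{τ-i+1}(t)
+ Σ_{j=τ-p+1}^{τ} A^{j-1} F_p δ_{τ-j+1}(t)`. -/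
def xhatP {n m l : ℕ} (τ p : ℕ) (A : Matrix (Fin n) (Fin n) ℝ)
    (B : Matrix (Fin n) (Fin m) ℝ) (Fp : Matrix (Fin n) (Fin l) ℝ)
    (x : ℕ → Fin n → ℝ) (uu : ℕ → ℕ → Fin m → ℝ) (dd : ℕ → ℕ → Fin l → ℝ)
    (t : ℕ) : Fin n → ℝ :=
  (A ^ τ).mulVec (x t) +
    (∑ i ∈ Finset.Icc 1 τ, (A ^ (i - 1)).mulVec (B.mulVec (uu t (τ - i + 1)))) +
    ∑ j ∈ Finset.Icc (τ - p + 1) τ, (A ^ (j - 1)).mulVec (Fp.mulVec (dd t (τ - j + 1)))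

open Pointwise

/-- The Minkowski difference `S₁ ⊖ S₂ = {x : x + y ∈ S₁ for all y ∈ S₂}`. -/
def minkDiff {n : ℕ} (S₁ S₂ : Set (Fin n → ℝ)) : Set (Fin n → ℝ) :=
  {x | ∀ y ∈ S₂, x + y ∈ S₁}

/-- The prediction error bound set
`(A⁰F₀D₀ ⊕ ⋯ ⊕ A^{a-1}F₀D₀) ⊕ (A⁰F_pD_p ⊕ ⋯ ⊕ A^{b-1}F_pD_p)`
(a Minkowski sum over an empty index range being `{0}`). -/
def ESet {n k₀ l : ℕ} (A : Matrix (Fin n) (Fin n) ℝ) (F₀ : Matrix (Fin n) (Fin k₀) ℝ)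
    (Fp : Matrix (Fin n) (Fin l) ℝ) (D₀ : Set (Fin k₀ → ℝ)) (Dp : Set (Fin l → ℝ))
    (a b : ℕ) : Set (Fin n → ℝ) :=
  (∑ i ∈ Finset.Icc 1 a, (fun v => (A ^ (i - 1)).mulVec (F₀.mulVec v)) '' D₀) +
    ∑ i ∈ Finset.Icc 1 b, (fun v => (A ^ (i - 1)).mulVec (Fp.mulVec v)) '' Dp


lemma mem_finset_set_sum {α : Type*} [AddCommMonoid α] {ι : Type*} (s : Finset ι)
    (S : ι → Set α) (f : ι → α) (h : ∀ i ∈ s, f i ∈ S i) :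
    ∑ i ∈ s, f i ∈ ∑ i ∈ s, S i := by
  classical
  induction s using Finset.cons_induction with
  | empty => simp
  | cons a s ha ih =>
    rw [Finset.sum_cons, Finset.sum_cons]
    exact Set.add_mem_add (h a (Finset.mem_cons_self a s))
      (ih fun i hi => h i (Finset.mem_cons_of_mem hi))

lemma mulVec_finset_sum {R : Type*} [CommRing R] {n m : Type*} [Fintype m]
    (A : Matrix n m R) {ι : Type*} (s : Finset ι) (f : ι → m → R) :
    A.mulVec (∑ i ∈ s, f i) = ∑ i ∈ s, A.mulVec (f i) := by
  exact map_sum (Matrix.mulVecLin A) f s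

/-- (Prediction error bound, preview case) For any trajectory of `Σ_aug^prev` with
`d₀(s) ∈ D₀` and `δ_f(s) ∈ D_p` for all `s`, and any `t ≥ 0`,
`x(t+τ) - x̂_τ(t) ∈ (A⁰F₀D₀ ⊕ ⋯ ⊕ A^{τ-1}F₀D₀) ⊕ (A⁰F_pD_p ⊕ ⋯ ⊕ A^{τ-p-1}F_pD_p)`;
consequently, if `x̂_τ(t) ∈ X̂`, then `x(t+τ) ∈ X`. -/
theorem prev_prediction_error_bound (n m k₀ l : ℕ) (hn : 0 < n) (hm : 0 < m) (hk : 0 < k₀)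
    (hl : 0 < l) (τ p : ℕ) (hτ : 1 ≤ τ) (hp1 : 1 ≤ p) (hpτ : p ≤ τ)
    (A : Matrix (Fin n) (Fin n) ℝ) (B : Matrix (Fin n) (Fin m) ℝ)
    (F₀ : Matrix (Fin n) (Fin k₀) ℝ) (Fp : Matrix (Fin n) (Fin l) ℝ)
    (D₀ : Set (Fin k₀ → ℝ)) (Dp : Set (Fin l → ℝ)) (X : Set (Fin n → ℝ))
    (x : ℕ → Fin n → ℝ) (uu : ℕ → ℕ → Fin m → ℝ) (dd : ℕ → ℕ → Fin l → ℝ)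
    (u : ℕ → Fin m → ℝ) (d₀ : ℕ → Fin k₀ → ℝ) (df : ℕ → Fin l → ℝ)
    (htraj : IsPrevTraj τ p A B F₀ Fp x uu dd u d₀ df)
    (hd₀ : ∀ s : ℕ, d₀ s ∈ D₀) (hdf : ∀ s : ℕ, df s ∈ Dp) :
    ∀ t : ℕ,
      x (t + τ) - xhatP τ p A B Fp x uu dd t ∈ ESet A F₀ Fp D₀ Dp τ (τ - p) ∧
      (xhatP τ p A B Fp x uu dd t ∈ minkDiff X (ESet A F₀ Fp D₀ Dp τ (τ - p)) →
        x (t + τ) ∈ X) := by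
  intro t
  -- input shift lemma
  have huu : ∀ r s j, 1 ≤ j → j + r ≤ τ → uu (s + r) j = uu s (j + r) := by
    intro r
    induction r with
    | zero => intro s j _ _; rfl
    | succ r ih =>
      intro s j h1 h2
      rw [show s + (r + 1) = (s + 1) + r by omega, ih (s + 1) j h1 (by omega),
        (htraj s).2.1 (j + r) (by omega) (by omega)]
      rfl
  -- previewed-disturbance shift lemma
  have hdd : ∀ r s j, 1 ≤ j → j + r ≤ p → dd (s + r) j = dd s (j + r) := by
    intro r
    induction r with
    | zero => intro s j _ _; rfl
    | succ r ih =>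
      intro s j h1 h2
      rw [show s + (r + 1) = (s + 1) + r by omega, ih (s + 1) j h1 (by omega),
        (htraj s).2.2.2.1 (j + r) (by omega) (by omega)]
      rfl
  have hddf : ∀ r s, r < p → dd (s + r + 1) (p - r) = df s := by
    intro r
    induction r with
    | zero => intro s _; simpa using (htraj s).2.2.2.2
    | succ r ih =>
      intro s hr
      have h1 : dd (s + (r + 1) + 1) (p - (r + 1)) = dd (s + r + 1) (p - (r + 1) + 1) := by
        have h := (htraj (s + r + 1)).2.2.2.1 (p - (r + 1)) (by omega) (by omega)
        rw [show s + (r + 1) + 1 = (s + r + 1) + 1 by omega]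
        exact h
      rw [h1, show p - (r + 1) + 1 = p - r by omega, ih s (by omega)]
  have hdf1 : ∀ s, dd (s + p) 1 = df s := by
    intro s
    have h := hddf (p - 1) s (by omega)
    rwa [show s + (p - 1) + 1 = s + p by omega, show p - (p - 1) = 1 by omega] at h
  -- explicit state formula
  have hx : ∀ s : ℕ, x (t + s) = (A ^ s).mulVec (x t)
      + (∑ i ∈ Finset.range s, (A ^ i).mulVec (B.mulVec (uu (t + (s - (i + 1))) 1)))
      + (∑ i ∈ Finset.range s, (A ^ i).mulVec (F₀.mulVec (d₀ (t + (s - (i + 1))))))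
      + ∑ i ∈ Finset.range s, (A ^ i).mulVec (Fp.mulVec (dd (t + (s - (i + 1))) 1)) := by
    intro s
    induction s with
    | zero => simp [Matrix.one_mulVec]
    | succ s ih =>
      have hstep := (htraj (t + s)).1
      have hA : ∀ (k : ℕ) (v : Fin n → ℝ), A.mulVec ((A ^ k).mulVec v)
          = (A ^ (k + 1)).mulVec v := fun k v => by
        rw [Matrix.mulVec_mulVec, ← pow_succ']
      rw [show t + (s + 1) = (t + s) + 1 from rfl, hstep, ih,
        Finset.sum_range_succ' (fun i => (A ^ i).mulVec (B.mulVec (uu (t + (s + 1 - (i + 1))) 1))),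
        Finset.sum_range_succ' (fun i => (A ^ i).mulVec (F₀.mulVec (d₀ (t + (s + 1 - (i + 1)))))),
        Finset.sum_range_succ' (fun i => (A ^ i).mulVec (Fp.mulVec (dd (t + (s + 1 - (i + 1))) 1)))]
      simp only [Matrix.mulVec_add, mulVec_finset_sum, hA, Nat.succ_sub_succ_eq_sub,
        pow_zero, Matrix.one_mulVec, Nat.sub_zero]
      abel
  -- rewriting the three sums
  have eB : (∑ i ∈ Finset.range τ, (A ^ i).mulVec (B.mulVec (uu (t + (τ - (i + 1))) 1)))
      = ∑ i ∈ Finset.Icc 1 τ, (A ^ (i - 1)).mulVec (B.mulVec (uu t (τ - i + 1))) := by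
    rw [← Finset.Ico_add_one_right_eq_Icc, Finset.sum_Ico_eq_sum_range,
      show τ + 1 - 1 = τ by omega]
    refine Finset.sum_congr rfl fun i hi => ?_
    rw [Finset.mem_range] at hi
    rw [huu (τ - (i + 1)) t 1 le_rfl (by omega), show 1 + i - 1 = i by omega,
      show τ - (1 + i) + 1 = 1 + (τ - (i + 1)) by omega]
  have e0 : (∑ i ∈ Finset.range τ, (A ^ i).mulVec (F₀.mulVec (d₀ (t + (τ - (i + 1))))))
      = ∑ j ∈ Finset.Icc 1 τ, (A ^ (j - 1)).mulVec (F₀.mulVec (d₀ (t + (τ - j)))) := by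
    rw [← Finset.Ico_add_one_right_eq_Icc, Finset.sum_Ico_eq_sum_range,
      show τ + 1 - 1 = τ by omega]
    refine Finset.sum_congr rfl fun i hi => ?_
    rw [Finset.mem_range] at hi
    rw [show 1 + i - 1 = i by omega, show τ - (1 + i) = τ - (i + 1) by omega]
  have eP : (∑ i ∈ Finset.range τ, (A ^ i).mulVec (Fp.mulVec (dd (t + (τ - (i + 1))) 1)))
      = (∑ j ∈ Finset.Icc 1 (τ - p), (A ^ (j - 1)).mulVec (Fp.mulVec (df (t + (τ - p - j)))))
      + ∑ j ∈ Finset.Icc (τ - p + 1) τ, (A ^ (j - 1)).mulVec (Fp.mulVec (dd t (τ - j + 1))) := by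
    rw [Finset.range_eq_Ico,
      ← Finset.sum_Ico_consecutive _ (Nat.zero_le (τ - p)) (by omega : τ - p ≤ τ)]
    congr 1
    · rw [← Finset.Ico_add_one_right_eq_Icc,
        Finset.sum_Ico_eq_sum_range, Finset.sum_Ico_eq_sum_range,
        show τ - p + 1 - 1 = τ - p by omega, show τ - p - 0 = τ - p by omega]
      refine Finset.sum_congr rfl fun i hi => ?_
      rw [Finset.mem_range] at hi
      rw [show t + (τ - (0 + i + 1)) = (t + (τ - p - (1 + i))) + p by omega, hdf1,
        show 0 + i = i by omega, show 1 + i - 1 = i by omega]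
    · rw [← Finset.Ico_add_one_right_eq_Icc,
        Finset.sum_Ico_eq_sum_range, Finset.sum_Ico_eq_sum_range,
        show τ - (τ - p) = p by omega, show τ + 1 - (τ - p + 1) = p by omega]
      refine Finset.sum_congr rfl fun i hi => ?_
      rw [Finset.mem_range] at hi
      rw [hdd (τ - (τ - p + i + 1)) t 1 le_rfl (by omega),
        show τ - p + 1 + i - 1 = τ - p + i by omega,
        show τ - (τ - p + 1 + i) + 1 = 1 + (τ - (τ - p + i + 1)) by omega]
  -- the key identity
  have key : x (t + τ) - xhatP τ p A B Fp x uu dd t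
      = (∑ j ∈ Finset.Icc 1 τ, (A ^ (j - 1)).mulVec (F₀.mulVec (d₀ (t + (τ - j)))))
      + ∑ j ∈ Finset.Icc 1 (τ - p), (A ^ (j - 1)).mulVec (Fp.mulVec (df (t + (τ - p - j)))) := by
    rw [hx τ, eB, e0, eP, xhatP]
    abel
  have hmem : x (t + τ) - xhatP τ p A B Fp x uu dd t ∈ ESet A F₀ Fp D₀ Dp τ (τ - p) := by
    rw [key, ESet]
    exact Set.add_mem_add
      (mem_finset_set_sum _ _ _ fun j _ => ⟨d₀ (t + (τ - j)), hd₀ _, rfl⟩)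
      (mem_finset_set_sum _ _ _ fun j _ => ⟨df (t + (τ - p - j)), hdf _, rfl⟩)
  refine ⟨hmem, fun h => ?_⟩
  have h2 := h _ hmem
  rwa [show xhatP τ p A B Fp x uu dd t + (x (t + τ) - xhatP τ p A B Fp x uu dd t)
    = x (t + τ) by abel] at h2
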